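/- Let K be a field of characteristic 2 and consider the power series ring K[[a_1,a_2,b_1,b_2]]. The element r = b_2·((1+a_1) − (1+a_1)^{-1}) − b_1·((1+a_2) − (1+a_2)^{-1}) is irreducible in K[[a_1,a_2,b_1,b_2]]. -/

import Mathlib

open MvPowerSeries Finsupp

namespace Statement2Aux

noncomputable section

variable {K : Type*} [Field K]

lemma deg_add (a b : Fin 4 →₀ ℕ) : degree (a + b) = degree a + degree b := by
  simp [degree_eq_weight_one, map_add]

lemma deg_single (i : Fin 4) (k : ℕ) : degree (Finsupp.single i k) = k := by
  simp [degree_eq_weight_one, Finsupp.weight_apply, Finsupp.sum_single_index]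

/-- The initial form of a power series as a polynomial. -/
def init (m : ℕ) (g : MvPowerSeries (Fin 4) K) : MvPolynomial (Fin 4) K :=
  MvPolynomial.homogeneousComponent m
    (MvPowerSeries.trunc K (Finsupp.equivFunOnFinite.symm (fun _ => m + 1)) g)

lemma coeff_init (m : ℕ) (g : MvPowerSeries (Fin 4) K) (d : Fin 4 →₀ ℕ) :
    MvPolynomial.coeff d (init m g) =
      if Finsupp.degree d = m then MvPowerSeries.coeff d g else 0 := by
  rw [init, MvPolynomial.coeff_homogeneousComponent, MvPowerSeries.coeff_trunc]
  by_cases hd : degree d = m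
  · rw [if_pos hd, if_pos hd, if_pos]
    constructor
    · intro i
      have h3 : ((Finsupp.equivFunOnFinite.symm fun _ => m + 1 : Fin 4 →₀ ℕ)) i = m + 1 := rfl
      rw [h3]
      exact (Finsupp.le_degree i d).trans_lt (by omega) |>.le
    · intro hle
      have h1 := hle 0
      have h2 := Finsupp.le_degree (0 : Fin 4) d
      have h3 : ((Finsupp.equivFunOnFinite.symm fun _ => m + 1 : Fin 4 →₀ ℕ)) 0 = m + 1 := rfl
      rw [h3] at h1
      omega
  · rw [if_neg hd, if_neg hd]

lemma init_isHomogeneous (m : ℕ) (g : MvPowerSeries (Fin 4) K) :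
    (init m g).IsHomogeneous m :=
  MvPolynomial.homogeneousComponent_isHomogeneous _ _


lemma coeff_init_mul (g h : MvPowerSeries (Fin 4) K) (m n : ℕ)
    (hg : ∀ d : Fin 4 →₀ ℕ, degree d < m → MvPowerSeries.coeff d g = 0)
    (hh : ∀ d : Fin 4 →₀ ℕ, degree d < n → MvPowerSeries.coeff d h = 0)
    (d : Fin 4 →₀ ℕ) (hd : degree d = m + n) :
    MvPolynomial.coeff d (init m g * init n h) = MvPowerSeries.coeff d (g * h) := by
  classical
  rw [MvPolynomial.coeff_mul, MvPowerSeries.coeff_mul]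
  apply Finset.sum_congr rfl
  rintro ⟨e, e'⟩ hp
  rw [Finset.HasAntidiagonal.mem_antidiagonal] at hp
  dsimp only
  have hdeg : degree e + degree e' = m + n := by rw [← deg_add, hp, hd]
  rcases lt_or_ge (degree e) m with h1 | h1
  · rw [coeff_init, if_neg (by omega), hg e h1, zero_mul, zero_mul]
  · rcases lt_or_ge (degree e') n with h2 | h2
    · rw [coeff_init (d := e'), if_neg (by omega), hh e' h2, mul_zero, mul_zero]
    · have e1 : degree e = m := by omega
      have e2 : degree e' = n := by omega
      rw [coeff_init, coeff_init, if_pos e1, if_pos e2]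

/-- the polynomial `P = a₁²b₂ - a₂²b₁`. -/
def P : MvPolynomial (Fin 4) K :=
  MvPolynomial.X 0 ^ 2 * MvPolynomial.X 3 + MvPolynomial.X 1 ^ 2 * MvPolynomial.X 2

lemma no_linear_factor [CharP K 2] (L Q : MvPolynomial (Fin 4) K)
    (hL : L.IsHomogeneous 1) (hE : L * Q = P) : False := by
  classical
  set α := MvPolynomial.coeff (Finsupp.single 0 1) L with hα
  set β := MvPolynomial.coeff (Finsupp.single 1 1) L with hβ
  set γ := MvPolynomial.coeff (Finsupp.single 2 1) L with hγ
  set δ := MvPolynomial.coeff (Finsupp.single 3 1) L with hδ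
  have hform : L = MvPolynomial.C α * MvPolynomial.X 0 + MvPolynomial.C β * MvPolynomial.X 1
      + MvPolynomial.C γ * MvPolynomial.X 2 + MvPolynomial.C δ * MvPolynomial.X 3 := by
    ext d
    by_cases hd : degree d = 1
    · -- d is a single
      have hsum : d 0 + d 1 + d 2 + d 3 = 1 := by
        have : degree d = ∑ i : Fin 4, d i := by
          rw [degree]
          exact Finset.sum_subset (Finset.subset_univ _)
            (fun x _ hx => by simpa using Finsupp.notMem_support_iff.mp hx)
        rw [this, Fin.sum_univ_four] at hd
        exact hd
      have : ∃ i : Fin 4, d = Finsupp.single i 1 := by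
        rcases Nat.eq_zero_or_pos (d 0) with h0 | h0
        · rcases Nat.eq_zero_or_pos (d 1) with h1 | h1
          · rcases Nat.eq_zero_or_pos (d 2) with h2 | h2
            · exact ⟨3, by ext j; fin_cases j <;> simp [Finsupp.single_apply] <;> omega⟩
            · exact ⟨2, by ext j; fin_cases j <;> simp [Finsupp.single_apply] <;> omega⟩
          · exact ⟨1, by ext j; fin_cases j <;> simp [Finsupp.single_apply] <;> omega⟩
        · exact ⟨0, by ext j; fin_cases j <;> simp [Finsupp.single_apply] <;> omega⟩
      obtain ⟨i, rfl⟩ := this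
      fin_cases i <;>
        simp [MvPolynomial.coeff_X', Finsupp.single_eq_single_iff, hα, hβ, hγ, hδ]
    · rw [hL.coeff_eq_zero hd]
      have : ∀ i : Fin 4, d ≠ Finsupp.single i 1 := by
        intro i hdi
        rw [hdi, deg_single] at hd
        exact hd rfl
      simp [MvPolynomial.coeff_X', fun i => (this i).symm]
  have heval : ∀ x : Fin 4 → K,
      (α * x 0 + β * x 1 + γ * x 2 + δ * x 3) * MvPolynomial.eval x Q
        = x 0 ^ 2 * x 3 + x 1 ^ 2 * x 2 := by
    intro x
    have := congrArg (MvPolynomial.eval x) hE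
    rw [hform] at this
    simpa [P, mul_comm] using this
  have two0 : (2 : K) = 0 := by
    have := CharP.cast_eq_zero K 2
    simpa using this
  have self0 : ∀ a : K, a + a = 0 := fun a => by
    have : a + a = 2 * a := by ring
    rw [this, two0, zero_mul]
  by_cases hδ0 : δ ≠ 0
  · have h := heval ![0, 1, 1, (β + γ) / δ]
    simp only [Matrix.cons_val_zero, Matrix.cons_val_one, Matrix.head_cons,
      Matrix.cons_val_two, Matrix.tail_cons, Matrix.cons_val_three] at h
    rw [mul_div_cancel₀ _ hδ0] at h
    have hz : α * 0 + β * 1 + γ * 1 + (β + γ) = 2 * (β + γ) := by ring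
    rw [hz, two0, zero_mul, zero_mul] at h
    exact one_ne_zero (α := K) (by first | linear_combination h | linear_combination -h)
  push_neg at hδ0
  by_cases hγ0 : γ ≠ 0
  · have h := heval ![1, 0, α / γ, 1]
    simp only [Matrix.cons_val_zero, Matrix.cons_val_one, Matrix.head_cons,
      Matrix.cons_val_two, Matrix.tail_cons, Matrix.cons_val_three] at h
    rw [mul_div_cancel₀ _ hγ0] at h
    have hz : α * 1 + β * 0 + α + δ * 1 = 2 * α + δ := by ring
    rw [hz, two0, zero_mul, hδ0, zero_add, zero_mul] at h
    exact one_ne_zero (α := K) (by first | linear_combination h | linear_combination -h)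
  push_neg at hγ0
  by_cases hα0 : α ≠ 0
  · have h := heval ![β, α, 1, 0]
    simp only [Matrix.cons_val_zero, Matrix.cons_val_one, Matrix.head_cons,
      Matrix.cons_val_two, Matrix.tail_cons, Matrix.cons_val_three] at h
    rw [hγ0, hδ0] at h
    have hz : α * β + β * α + 0 * 1 + 0 * 0 = 2 * (α * β) := by ring
    rw [hz, two0, zero_mul, zero_mul] at h
    have h2 : α ^ 2 = 0 := by first | linear_combination h | linear_combination -h
    exact hα0 (pow_eq_zero_iff (n := 2) (by norm_num) |>.mp h2)
  push_neg at hα0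
  · have h := heval ![1, 0, 0, 1]
    simp only [Matrix.cons_val_zero, Matrix.cons_val_one, Matrix.head_cons,
      Matrix.cons_val_two, Matrix.tail_cons, Matrix.cons_val_three] at h
    rw [hγ0, hδ0, hα0] at h
    have hz : (0:K) * 1 + β * 0 + 0 * 0 + 0 * 1 = 0 := by ring
    rw [hz, zero_mul] at h
    exact one_ne_zero (α := K) (by first | linear_combination h | linear_combination -h)


/-- exponents -/
def e1 : Fin 4 →₀ ℕ := Finsupp.single 0 2 + Finsupp.single 3 1
def e2 : Fin 4 →₀ ℕ := Finsupp.single 0 2 + Finsupp.single 1 1 + Finsupp.single 3 1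
def e3 : Fin 4 →₀ ℕ := Finsupp.single 1 2 + Finsupp.single 2 1
def e4 : Fin 4 →₀ ℕ := Finsupp.single 0 1 + Finsupp.single 1 2 + Finsupp.single 2 1

lemma deg_e1 : degree (e1) = 3 := by simp [e1, deg_add, deg_single]
lemma deg_e2 : degree (e2) = 4 := by simp [e2, deg_add, deg_single]
lemma deg_e3 : degree (e3) = 3 := by simp [e3, deg_add, deg_single]
lemma deg_e4 : degree (e4) = 4 := by simp [e4, deg_add, deg_single]

/-- the polynomial SP -/
def SP : MvPolynomial (Fin 4) K :=
  MvPolynomial.X 0 ^ 2 * MvPolynomial.X 3 + MvPolynomial.X 0 ^ 2 * MvPolynomial.X 1 * MvPolynomial.X 3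
    + MvPolynomial.X 1 ^ 2 * MvPolynomial.X 2 + MvPolynomial.X 0 * MvPolynomial.X 1 ^ 2 * MvPolynomial.X 2

lemma hX (i : Fin 4) : (MvPolynomial.X i : MvPolynomial (Fin 4) K)
    = MvPolynomial.monomial (Finsupp.single i 1) 1 := rfl

lemma SP_eq : (SP : MvPolynomial (Fin 4) K)
    = MvPolynomial.monomial e1 1 + MvPolynomial.monomial e2 1
      + MvPolynomial.monomial e3 1 + MvPolynomial.monomial e4 1 := by
  simp only [SP, hX, MvPolynomial.X_pow_eq_monomial, MvPolynomial.monomial_pow,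
    MvPolynomial.monomial_mul, one_mul, mul_one, one_pow, Finsupp.smul_single, smul_eq_mul,
    e1, e2, e3, e4]

lemma P_eq : (P : MvPolynomial (Fin 4) K)
    = MvPolynomial.monomial e1 1 + MvPolynomial.monomial e3 1 := by
  simp only [P, hX, MvPolynomial.X_pow_eq_monomial, MvPolynomial.monomial_pow,
    MvPolynomial.monomial_mul, one_mul, mul_one, one_pow, Finsupp.smul_single, smul_eq_mul,
    e1, e3]

lemma coeff_SP (d : Fin 4 →₀ ℕ) : MvPolynomial.coeff d (SP : MvPolynomial (Fin 4) K)
    = ((if e1 = d then (1:K) else 0) + (if e2 = d then 1 else 0))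
      + (if e3 = d then 1 else 0) + (if e4 = d then 1 else 0) := by
  classical
  rw [SP_eq]
  simp [MvPolynomial.coeff_monomial]

lemma coeff_P (d : Fin 4 →₀ ℕ) : MvPolynomial.coeff d (P : MvPolynomial (Fin 4) K)
    = (if e1 = d then (1:K) else 0) + (if e3 = d then 1 else 0) := by
  classical
  rw [P_eq]
  simp [MvPolynomial.coeff_monomial]

lemma coeff_SP_low (d : Fin 4 →₀ ℕ) (hd : degree d < 3) :
    MvPolynomial.coeff d (SP : MvPolynomial (Fin 4) K) = 0 := by
  rw [coeff_SP]
  rw [if_neg, if_neg, if_neg, if_neg] <;> try ring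
  all_goals rintro rfl
  · rw [deg_e4] at hd; omega
  · rw [deg_e3] at hd; omega
  · rw [deg_e2] at hd; omega
  · rw [deg_e1] at hd; omega

lemma coeff_SP_three (d : Fin 4 →₀ ℕ) (hd : degree d = 3) :
    MvPolynomial.coeff d (SP : MvPolynomial (Fin 4) K)
      = MvPolynomial.coeff d (P : MvPolynomial (Fin 4) K) := by
  have h2 : e2 ≠ d := by rintro rfl; rw [deg_e2] at hd; omega
  have h4 : e4 ≠ d := by rintro rfl; rw [deg_e4] at hd; omega
  rw [coeff_SP, coeff_P, if_neg h2, if_neg h4]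
  ring

lemma coeff_SP_e1 : MvPolynomial.coeff e1 (SP : MvPolynomial (Fin 4) K) = 1 := by
  rw [coeff_SP, if_pos rfl, if_neg, if_neg, if_neg]
  · ring
  · intro hh
    have := DFunLike.congr_fun hh (1 : Fin 4)
    simp [e4, e1, Finsupp.single_apply] at this
  · intro hh
    have := DFunLike.congr_fun hh (0 : Fin 4)
    simp [e3, e1, Finsupp.single_apply] at this
  · intro hh
    have := DFunLike.congr_fun hh (1 : Fin 4)
    simp [e2, e1, Finsupp.single_apply] at this

lemma coeff_P_ne_three (d : Fin 4 →₀ ℕ) (hd : degree d ≠ 3) :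
    MvPolynomial.coeff d (P : MvPolynomial (Fin 4) K) = 0 := by
  rw [coeff_P]
  rw [if_neg, if_neg]
  · ring
  · rintro rfl; exact hd deg_e3
  · rintro rfl; exact hd deg_e1

theorem irreducible_SP [CharP K 2] :
    Irreducible ((SP : MvPolynomial (Fin 4) K) : MvPowerSeries (Fin 4) K) := by
  classical
  constructor
  · rw [MvPowerSeries.isUnit_iff_constantCoeff]
    rw [← MvPowerSeries.coeff_zero_eq_constantCoeff_apply, MvPolynomial.coeff_coe,
      coeff_SP_low 0 (by simp)]
    simp
  · intro g h hgh
    by_contra hcon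
    push_neg at hcon
    obtain ⟨hgu, hhu⟩ := hcon
    have cg : MvPowerSeries.constantCoeff g = 0 := by
      by_contra hc
      exact hgu (MvPowerSeries.isUnit_iff_constantCoeff.mpr (isUnit_iff_ne_zero.mpr hc))
    have ch : MvPowerSeries.constantCoeff h = 0 := by
      by_contra hc
      exact hhu (MvPowerSeries.isUnit_iff_constantCoeff.mpr (isUnit_iff_ne_zero.mpr hc))
    have hSPne : ((SP : MvPolynomial (Fin 4) K) : MvPowerSeries (Fin 4) K) ≠ 0 := by
      intro h0
      have := congrArg (MvPowerSeries.coeff e1) h0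
      rw [MvPolynomial.coeff_coe, coeff_SP_e1] at this
      simpa using this
    have hg0 : g ≠ 0 := by rintro rfl; rw [zero_mul] at hgh; exact hSPne hgh
    have hh0 : h ≠ 0 := by rintro rfl; rw [mul_zero] at hgh; exact hSPne hgh
    have hgfin := (MvPowerSeries.ne_zero_iff_order_finite).mp hg0
    have hhfin := (MvPowerSeries.ne_zero_iff_order_finite).mp hh0
    set m := (MvPowerSeries.order g).toNat with hm
    set n := (MvPowerSeries.order h).toNat with hn
    -- lower bounds
    have hcoeff_low : ∀ (f : MvPowerSeries (Fin 4) K),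
        MvPowerSeries.constantCoeff f = 0 →
        (1 : ℕ∞) ≤ MvPowerSeries.order f := by
      intro f hf
      refine MvPowerSeries.le_order ?_
      intro d hd
      have : degree d = 0 := by
        by_contra hne
        have h1 : 1 ≤ degree d := Nat.one_le_iff_ne_zero.mpr hne
        have : (1 : ℕ∞) ≤ ((degree d : ℕ) : ℕ∞) := by exact_mod_cast h1
        exact absurd hd (not_lt.mpr this)
      rw [(degree_eq_zero_iff d).mp this]
      rw [MvPowerSeries.coeff_zero_eq_constantCoeff]
      exact hf
    have hm1 : 1 ≤ m := by
      have := hcoeff_low g cg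
      rw [← hgfin] at this
      exact_mod_cast this
    have hn1 : 1 ≤ n := by
      have := hcoeff_low h ch
      rw [← hhfin] at this
      exact_mod_cast this
    have hglow : ∀ d : Fin 4 →₀ ℕ, degree d < m → MvPowerSeries.coeff d g = 0 := by
      intro d hd
      refine MvPowerSeries.coeff_of_lt_order ?_
      rw [← hgfin]
      exact_mod_cast hd
    have hhlow : ∀ d : Fin 4 →₀ ℕ, degree d < n → MvPowerSeries.coeff d h = 0 := by
      intro d hd
      refine MvPowerSeries.coeff_of_lt_order ?_
      rw [← hhfin]
      exact_mod_cast hd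
    -- m + n ≤ 3
    have hmn3 : m + n ≤ 3 := by
      have h1 : MvPowerSeries.order ((SP : MvPolynomial (Fin 4) K) : MvPowerSeries (Fin 4) K)
          ≤ (3 : ℕ) := by
        have : MvPowerSeries.coeff e1 ((SP : MvPolynomial (Fin 4) K) : MvPowerSeries (Fin 4) K) ≠ 0 := by
          rw [MvPolynomial.coeff_coe, coeff_SP_e1]; exact one_ne_zero
        have := MvPowerSeries.order_le this
        rwa [deg_e1] at this
      have h2 : ((m : ℕ∞) + n) ≤ (3 : ℕ) := by
        rw [hgfin, hhfin]
        refine le_trans (MvPowerSeries.le_order_mul) ?_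
        rw [← hgh]
        exact h1
      exact_mod_cast h2
    -- initial forms
    set G := init m g with hG
    set H := init n h with hH
    obtain ⟨dg, hdgne, hdgdeg⟩ := MvPowerSeries.exists_coeff_ne_zero_and_order hgfin
    obtain ⟨dh, hdhne, hdhdeg⟩ := MvPowerSeries.exists_coeff_ne_zero_and_order hhfin
    have hdgm : degree dg = m := by
      have := congrArg ENat.toNat hdgdeg
      simpa using this
    have hdhn : degree dh = n := by
      have := congrArg ENat.toNat hdhdeg
      simpa using this
    have hGne : G ≠ 0 := by
      intro h0
      have : MvPolynomial.coeff dg G ≠ 0 := by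
        rw [hG, coeff_init, if_pos hdgm]; exact hdgne
      rw [h0] at this
      simp at this
    have hHne : H ≠ 0 := by
      intro h0
      have : MvPolynomial.coeff dh H ≠ 0 := by
        rw [hH, coeff_init, if_pos hdhn]; exact hdhne
      rw [h0] at this
      simp at this
    have hGHhom : (G * H).IsHomogeneous (m + n) :=
      (init_isHomogeneous m g).mul (init_isHomogeneous n h)
    -- m + n = 3
    have hmn : m + n = 3 := by
      obtain ⟨d0, hd0⟩ := MvPolynomial.ne_zero_iff.mp (mul_ne_zero hGne hHne)
      have hd0deg : degree d0 = m + n := by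
        by_contra hne
        exact hd0 (hGHhom.coeff_eq_zero hne)
      have hcc := coeff_init_mul g h m n hglow hhlow d0 hd0deg
      rw [← hG, ← hH] at hcc
      rw [hcc, ← hgh, MvPolynomial.coeff_coe] at hd0
      by_contra hne
      have : m + n < 3 := by omega
      exact hd0 (coeff_SP_low d0 (by omega))
    -- G * H = P
    have hGHP : G * H = (P : MvPolynomial (Fin 4) K) := by
      ext d
      by_cases hdeg : degree d = 3
      · have hcc := coeff_init_mul g h m n hglow hhlow d (by omega)
        rw [← hG, ← hH] at hcc
        rw [hcc, ← hgh, MvPolynomial.coeff_coe, coeff_SP_three d hdeg]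
      · rw [hGHhom.coeff_eq_zero (by omega), coeff_P_ne_three d hdeg]
    -- contradiction via no linear factor
    rcases (by omega : m = 1 ∨ n = 1) with h1 | h1
    · refine no_linear_factor G H ?_ hGHP
      rw [hG, ← h1]
      exact init_isHomogeneous m g
    · refine no_linear_factor H G ?_ (by rw [mul_comm]; exact hGHP)
      rw [hH, ← h1]
      exact init_isHomogeneous n h

theorem irreducible_r [CharP K 2] :
    Irreducible
      ((MvPowerSeries.X 3) *
          ((1 + MvPowerSeries.X 0) - (1 + MvPowerSeries.X 0)⁻¹)
        - (MvPowerSeries.X 2) *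
          ((1 + MvPowerSeries.X 1) - (1 + MvPowerSeries.X 1)⁻¹)
        : MvPowerSeries (Fin 4) K) := by
  classical
  have c0 : MvPowerSeries.constantCoeff (1 + MvPowerSeries.X 0 : MvPowerSeries (Fin 4) K) = 1 := by simp
  have c1 : MvPowerSeries.constantCoeff (1 + MvPowerSeries.X 1 : MvPowerSeries (Fin 4) K) = 1 := by simp
  have i0 : (1 + MvPowerSeries.X 0 : MvPowerSeries (Fin 4) K)
      * (1 + MvPowerSeries.X 0 : MvPowerSeries (Fin 4) K)⁻¹ = 1 :=
    MvPowerSeries.mul_inv_cancel _ (by rw [c0]; exact one_ne_zero)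
  have i1 : (1 + MvPowerSeries.X 1 : MvPowerSeries (Fin 4) K)
      * (1 + MvPowerSeries.X 1 : MvPowerSeries (Fin 4) K)⁻¹ = 1 :=
    MvPowerSeries.mul_inv_cancel _ (by rw [c1]; exact one_ne_zero)
  have two0 : (2 : MvPowerSeries (Fin 4) K) = 0 := by
    have h2K : (2 : K) = 0 := by simpa using CharP.cast_eq_zero K 2
    have hmap := map_ofNat (MvPowerSeries.C (σ := Fin 4) (R := K)) 2
    rw [← hmap, h2K, map_zero]
  have key : ((SP : MvPolynomial (Fin 4) K) : MvPowerSeries (Fin 4) K)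
      = ((MvPowerSeries.X 3) *
          ((1 + MvPowerSeries.X 0) - (1 + MvPowerSeries.X 0)⁻¹)
        - (MvPowerSeries.X 2) *
          ((1 + MvPowerSeries.X 1) - (1 + MvPowerSeries.X 1)⁻¹)
        : MvPowerSeries (Fin 4) K)
        * ((1 + MvPowerSeries.X 0) * (1 + MvPowerSeries.X 1)) := by
    have hSPcoe : ((SP : MvPolynomial (Fin 4) K) : MvPowerSeries (Fin 4) K)
        = MvPowerSeries.X 0 ^ 2 * MvPowerSeries.X 3
          + MvPowerSeries.X 0 ^ 2 * MvPowerSeries.X 1 * MvPowerSeries.X 3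
          + MvPowerSeries.X 1 ^ 2 * MvPowerSeries.X 2
          + MvPowerSeries.X 0 * MvPowerSeries.X 1 ^ 2 * MvPowerSeries.X 2 := by
      simp [SP]
    have expand : ((MvPowerSeries.X 3) *
          ((1 + MvPowerSeries.X 0) - (1 + MvPowerSeries.X 0)⁻¹)
        - (MvPowerSeries.X 2) *
          ((1 + MvPowerSeries.X 1) - (1 + MvPowerSeries.X 1)⁻¹)
        : MvPowerSeries (Fin 4) K)
        * ((1 + MvPowerSeries.X 0) * (1 + MvPowerSeries.X 1))
        = MvPowerSeries.X 3 * (1 + MvPowerSeries.X 1) *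
            ((1 + MvPowerSeries.X 0) * (1 + MvPowerSeries.X 0)
              - (1 + MvPowerSeries.X 0) * (1 + MvPowerSeries.X 0)⁻¹)
          - MvPowerSeries.X 2 * (1 + MvPowerSeries.X 0) *
            ((1 + MvPowerSeries.X 1) * (1 + MvPowerSeries.X 1)
              - (1 + MvPowerSeries.X 1) * (1 + MvPowerSeries.X 1)⁻¹) := by
      ring
    rw [hSPcoe, expand, i0, i1]
    linear_combination (- MvPowerSeries.X 0 * MvPowerSeries.X 3 * (1 + MvPowerSeries.X 1)
      + MvPowerSeries.X 1 * MvPowerSeries.X 2 * (1 + MvPowerSeries.X 0)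
      + MvPowerSeries.X 1 ^ 2 * MvPowerSeries.X 2 * (1 + MvPowerSeries.X 0)) * two0
  have hu : IsUnit ((1 + MvPowerSeries.X 0) * (1 + MvPowerSeries.X 1)
      : MvPowerSeries (Fin 4) K) := by
    rw [MvPowerSeries.isUnit_iff_constantCoeff]
    simp
  refine Associated.irreducible ?_ (irreducible_SP (K := K))
  exact Associated.symm ⟨hu.unit, by rw [IsUnit.unit_spec]; exact key.symm⟩

end
end Statement2Aux


/-- Let `K` be a field of characteristic 2. In the power series ring `K[[a₁, a₂, b₁, b₂]]`
(here `a₁ = X 0`, `a₂ = X 1`, `b₁ = X 2`, `b₂ = X 3`), the element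
`r = b₂·((1+a₁) − (1+a₁)⁻¹) − b₁·((1+a₂) − (1+a₂)⁻¹)` is irreducible. -/
theorem statement2 {K : Type*} [Field K] [CharP K 2] :
    Irreducible
      ((MvPowerSeries.X 3) *
          ((1 + MvPowerSeries.X 0) - (1 + MvPowerSeries.X 0)⁻¹)
        - (MvPowerSeries.X 2) *
          ((1 + MvPowerSeries.X 1) - (1 + MvPowerSeries.X 1)⁻¹)
        : MvPowerSeries (Fin 4) K) :=
  Statement2Aux.irreducible_r
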